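/- Geodesic formula: for positive definite matrices p, q, the curve γ(t) = p^{1/2} (p^{-1/2} q p^{-1/2})^t p^{1/2} satisfies γ(0) = p, γ(1) = q, and its values are positive definite for all real t; moreover dist(γ(s), γ(t)) = |t − s| · dist(p,q). -/

import Mathlib

open Matrix
open scoped ComplexOrder
noncomputable section

/-- matrix exponential -/
def mexp {n : ℕ} (x : Matrix (Fin n) (Fin n) ℂ) : Matrix (Fin n) (Fin n) ℂ :=
  NormedSpace.exp x

/-- logarithm of a positive definite (Hermitian) matrix, via spectral decomposition -/
def mlog {n : ℕ} (p : Matrix (Fin n) (Fin n) ℂ) : Matrix (Fin n) (Fin n) ℂ :=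
  if h : p.IsHermitian then
    (h.eigenvectorUnitary : Matrix (Fin n) (Fin n) ℂ) *
      Matrix.diagonal (fun i => (Real.log (h.eigenvalues i) : ℂ)) *
      (star (h.eigenvectorUnitary : Matrix (Fin n) (Fin n) ℂ))
  else 0

/-- Frobenius norm -/
def frob {n : ℕ} (a : Matrix (Fin n) (Fin n) ℂ) : ℝ :=
  Real.sqrt (Matrix.trace (aᴴ * a)).re

/-- p^{1/2} for positive definite p -/
def psqrt {n : ℕ} (p : Matrix (Fin n) (Fin n) ℂ) : Matrix (Fin n) (Fin n) ℂ :=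
  mexp ((1/2 : ℝ) • mlog p)

/-- geodesic distance on positive definite matrices -/
def gdist {n : ℕ} (p q : Matrix (Fin n) (Fin n) ℂ) : ℝ :=
  frob (mlog ((psqrt p)⁻¹ * q * (psqrt p)⁻¹))

open Polynomial

section Aux
open Polynomial

variable {n : ℕ}
local notation "Mat" => Matrix (Fin n) (Fin n) ℂ

lemma unit_isUnit (U : Matrix.unitaryGroup (Fin n) ℂ) : IsUnit (U : Mat) :=
  ⟨Unitary.toUnits U, rfl⟩

lemma star_eq_inv (U : Matrix.unitaryGroup (Fin n) ℂ) : star (U : Mat) = (U : Mat)⁻¹ :=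
  (Matrix.inv_eq_left_inv (Matrix.mem_unitaryGroup_iff'.mp U.2)).symm

lemma mexp_conj_diag (U : Matrix.unitaryGroup (Fin n) ℂ) (c : Fin n → ℂ) :
    NormedSpace.exp ((U : Mat) * Matrix.diagonal c * star (U : Mat)) =
      (U : Mat) * Matrix.diagonal (fun i => Complex.exp (c i)) * star (U : Mat) := by
  rw [_root_.star_eq_inv, Matrix.exp_conj _ _ (unit_isUnit U), Matrix.exp_diagonal]
  congr 2
  rw [Pi.exp_def]
  funext i
  rw [Complex.exp_eq_exp_ℂ]

lemma conj_diag_isHermitian (U : Matrix.unitaryGroup (Fin n) ℂ) (c : Fin n → ℝ) :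
    ((U : Mat) * Matrix.diagonal (fun i => (c i : ℂ)) * star (U : Mat)).IsHermitian := by
  rw [Matrix.star_eq_conjTranspose]
  exact Matrix.isHermitian_mul_mul_conjTranspose _
    (Matrix.isHermitian_diagonal_of_self_adjoint _
      (funext fun i => by simp [Pi.star_apply, Complex.conj_ofReal]))

lemma posDef_conj {B M : Mat} (hM : M.PosDef) (hB : IsUnit B) :
    (Bᴴ * M * B).PosDef := by
  have hBinj : Function.Injective (B.mulVec) :=
    Matrix.mulVec_injective_iff_isUnit.mpr hB
  refine Matrix.PosDef.of_dotProduct_mulVec_pos ?_ (fun x hx => ?_)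
  · unfold Matrix.IsHermitian
    rw [Matrix.conjTranspose_mul, Matrix.conjTranspose_mul, Matrix.conjTranspose_conjTranspose,
      hM.1.eq, mul_assoc]
  · have hBx : B *ᵥ x ≠ 0 := by
      intro h
      exact hx (hBinj (by simpa using h))
    have := hM.dotProduct_mulVec_pos hBx
    calc (0 : ℂ) < star (B *ᵥ x) ⬝ᵥ (M *ᵥ (B *ᵥ x)) := this
      _ = star x ⬝ᵥ ((Bᴴ * M * B) *ᵥ x) := by
          rw [← Matrix.mulVec_mulVec, ← Matrix.mulVec_mulVec, Matrix.star_mulVec,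
            Matrix.dotProduct_mulVec (star x)]

lemma conj_diag_posDef (U : Matrix.unitaryGroup (Fin n) ℂ) {c : Fin n → ℝ}
    (hc : ∀ i, 0 < c i) :
    ((U : Mat) * Matrix.diagonal (fun i => (c i : ℂ)) * star (U : Mat)).PosDef := by
  have hd : (Matrix.diagonal (fun i => (c i : ℂ))).PosDef := by
    rw [Matrix.posDef_diagonal_iff]
    intro i
    exact_mod_cast hc i
  have := posDef_conj (B := star (U : Mat)) hd (unit_isUnit U).star
  simpa [Matrix.star_eq_conjTranspose] using this

lemma conj_diag_mul (U : Matrix.unitaryGroup (Fin n) ℂ) (c d : Fin n → ℂ) :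
    ((U : Mat) * Matrix.diagonal c * star (U : Mat)) *
      ((U : Mat) * Matrix.diagonal d * star (U : Mat)) =
    (U : Mat) * Matrix.diagonal (fun i => c i * d i) * star (U : Mat) := by
  have h2 : ∀ X : Mat, star (U : Mat) * ((U : Mat) * X) = X := fun X => by
    rw [← mul_assoc, Matrix.mem_unitaryGroup_iff'.mp U.2, one_mul]
  simp only [mul_assoc, h2]
  rw [← mul_assoc (Matrix.diagonal c), Matrix.diagonal_mul_diagonal]

lemma charpoly_conj_unit {g : Mat} (hg : IsUnit g) (A : Mat) :
    (g * A * g⁻¹).charpoly = A.charpoly := by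
  have hdet : IsUnit g.det := (Matrix.isUnit_iff_isUnit_det g).mp hg
  have hinv : g * g⁻¹ = 1 := Matrix.mul_nonsing_inv g hdet
  let f : Mat →+* Matrix (Fin n) (Fin n) ℂ[X] := (Polynomial.C (R := ℂ)).mapMatrix
  have hf1 : f g * f g⁻¹ = 1 := by rw [← _root_.map_mul, hinv, _root_.map_one]
  have hcm : charmatrix (g * A * g⁻¹) = f g * charmatrix A * f g⁻¹ := by
    unfold Matrix.charmatrix
    rw [mul_sub, sub_mul, _root_.map_mul, _root_.map_mul]
    congr 1
    have : (f g) * Matrix.scalar (Fin n) (X : ℂ[X]) = Matrix.scalar (Fin n) (X : ℂ[X]) * f g :=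
      (Matrix.scalar_commute (X : ℂ[X]) (fun r' => Commute.all _ _) (f g)).symm
    rw [this, mul_assoc, hf1, mul_one]
  rw [Matrix.charpoly, Matrix.charpoly, hcm, Matrix.det_mul, Matrix.det_mul]
  have h2 : (f g).det * (f g⁻¹).det = 1 := by rw [← Matrix.det_mul, hf1, Matrix.det_one]
  calc (f g).det * (charmatrix A).det * (f g⁻¹).det
      = (charmatrix A).det * ((f g).det * (f g⁻¹).det) := by ring
    _ = (charmatrix A).det := by rw [h2, mul_one]

lemma charpoly_mul_comm_unit {A : Mat} (hA : IsUnit A) (B : Mat) :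
    (A * B).charpoly = (B * A).charpoly := by
  have h : A * (B * A) * A⁻¹ = A * B := by
    rw [← mul_assoc, mul_assoc, Matrix.mul_nonsing_inv _
      ((Matrix.isUnit_iff_isUnit_det A).mp hA), mul_one]
  rw [← h, charpoly_conj_unit hA]

lemma charpoly_diagonal (c : Fin n → ℂ) :
    (Matrix.diagonal c).charpoly = ∏ i, (X - C (c i)) := by
  have : charmatrix (Matrix.diagonal c) = Matrix.diagonal (fun i => (X : ℂ[X]) - C (c i)) := by
    ext i j
    by_cases h : i = j
    · subst h; simp
    · rw [Matrix.charmatrix_apply_ne _ _ _ h, Matrix.diagonal_apply_ne _ h,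
        Matrix.diagonal_apply_ne _ h, map_zero, neg_zero]
  rw [Matrix.charpoly, this, Matrix.det_diagonal]

lemma charpoly_eq_prod_eig {A : Mat} (hA : A.IsHermitian) :
    A.charpoly = ∏ i, (X - C ((hA.eigenvalues i : ℂ))) := by
  have hsi : star (hA.eigenvectorUnitary : Mat) = (hA.eigenvectorUnitary : Mat)⁻¹ :=
    star_eq_inv _
  have hU := hA.spectral_theorem
  rw [Unitary.conjStarAlgAut_apply, hsi] at hU
  have hde : (Matrix.diagonal (RCLike.ofReal ∘ hA.eigenvalues) :
      Matrix (Fin n) (Fin n) ℂ) = Matrix.diagonal (fun i => ((hA.eigenvalues i : ℝ) : ℂ)) := rfl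
  rw [hde] at hU
  have hUU : IsUnit ((hA.eigenvectorUnitary : Mat)) := unit_isUnit _
  have := congrArg Matrix.charpoly hU
  rw [charpoly_conj_unit hUU, _root_.charpoly_diagonal] at this
  exact this

/-- eigenvalue multiset determined by the characteristic polynomial -/
lemma eig_multiset {A : Mat} (hA : A.IsHermitian) {c : Fin n → ℝ}
    (h : A.charpoly = ∏ i, (X - C ((c i : ℂ)))) :
    Finset.univ.val.map hA.eigenvalues = Finset.univ.val.map c := by
  have e2 := charpoly_eq_prod_eig hA
  have h1 : ((Finset.univ.val.map (fun i => ((hA.eigenvalues i : ℝ) : ℂ))).map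
      (fun r => X - C r)).prod =
      ((Finset.univ.val.map (fun i => ((c i : ℝ) : ℂ))).map (fun r => X - C r)).prod := by
    simp only [Multiset.map_map, Function.comp]
    rw [← Finset.prod_eq_multiset_prod, ← Finset.prod_eq_multiset_prod, ← h, ← e2]
  have key := congrArg Polynomial.roots h1
  rw [Polynomial.roots_multiset_prod_X_sub_C, Polynomial.roots_multiset_prod_X_sub_C] at key
  have h3 : (Finset.univ.val.map hA.eigenvalues).map (fun x : ℝ => (x : ℂ)) =
      (Finset.univ.val.map c).map (fun x : ℝ => (x : ℂ)) := by
    rw [Multiset.map_map, Multiset.map_map]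
    exact key
  exact Multiset.map_injective Complex.ofReal_injective h3

lemma mlog_eq {A : Mat} (hA : A.IsHermitian) :
    mlog A = (hA.eigenvectorUnitary : Mat) *
      Matrix.diagonal (fun i => (Real.log (hA.eigenvalues i) : ℂ)) *
      star (hA.eigenvectorUnitary : Mat) := by
  rw [mlog, dif_pos hA]

lemma mlog_isHermitian {A : Mat} (hA : A.IsHermitian) : (mlog A).IsHermitian := by
  rw [mlog_eq hA]
  exact conj_diag_isHermitian _ _

lemma mexp_smul_mlog {A : Mat} (hA : A.IsHermitian) (t : ℝ) :
    mexp (t • mlog A) = (hA.eigenvectorUnitary : Mat) *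
      Matrix.diagonal (fun i => (Real.exp (t * Real.log (hA.eigenvalues i)) : ℂ)) *
      star (hA.eigenvectorUnitary : Mat) := by
  have h2 : t • mlog A = (hA.eigenvectorUnitary : Mat) *
      Matrix.diagonal (fun i => ((t * Real.log (hA.eigenvalues i) : ℝ) : ℂ)) *
      star (hA.eigenvectorUnitary : Mat) := by
    rw [mlog_eq hA, ← smul_mul_assoc, ← mul_smul_comm, ← Matrix.diagonal_smul]
    have : (t • fun i => (Real.log (hA.eigenvalues i) : ℂ)) =
        fun i => ((t * Real.log (hA.eigenvalues i) : ℝ) : ℂ) := by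
      funext i
      rw [Pi.smul_apply, Complex.real_smul, ← Complex.ofReal_mul]
    rw [this]
  rw [mexp, h2, mexp_conj_diag]
  have : (fun i => Complex.exp ((t * Real.log (hA.eigenvalues i) : ℝ) : ℂ)) =
      fun i => ((Real.exp (t * Real.log (hA.eigenvalues i)) : ℝ) : ℂ) := by
    funext i
    rw [← Complex.ofReal_exp]
  rw [this]

lemma mexp_mlog {A : Mat} (hA : A.PosDef) : mexp (mlog A) = A := by
  have h1 : mlog A = (1 : ℝ) • mlog A := (one_smul _ _).symm
  rw [h1, mexp_smul_mlog hA.1]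
  have : (fun i => (Real.exp (1 * Real.log (hA.1.eigenvalues i)) : ℂ)) =
      fun i => ((hA.1.eigenvalues i : ℝ) : ℂ) := by
    funext i
    rw [one_mul, Real.exp_log (hA.eigenvalues_pos i)]
  rw [this]
  exact hA.1.spectral_theorem.symm

lemma psqrt_eq {A : Mat} (hA : A.PosDef) :
    psqrt A = (hA.1.eigenvectorUnitary : Mat) *
      Matrix.diagonal (fun i => (Real.exp ((1/2 : ℝ) * Real.log (hA.1.eigenvalues i)) : ℂ)) *
      star (hA.1.eigenvectorUnitary : Mat) :=
  mexp_smul_mlog hA.1 _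

lemma psqrt_posDef {A : Mat} (hA : A.PosDef) : (psqrt A).PosDef := by
  rw [psqrt_eq hA]
  exact conj_diag_posDef _ (fun i => Real.exp_pos _)

lemma psqrt_mul_self {A : Mat} (hA : A.PosDef) : psqrt A * psqrt A = A := by
  rw [psqrt_eq hA, conj_diag_mul]
  have : (fun i => (Real.exp ((1/2 : ℝ) * Real.log (hA.1.eigenvalues i)) : ℂ) *
      (Real.exp ((1/2 : ℝ) * Real.log (hA.1.eigenvalues i)) : ℂ)) =
      fun i => ((hA.1.eigenvalues i : ℝ) : ℂ) := by
    funext i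
    rw [← Complex.ofReal_mul, ← Real.exp_add]
    have h5 : (1/2 : ℝ) * Real.log (hA.1.eigenvalues i) +
        (1/2 : ℝ) * Real.log (hA.1.eigenvalues i) = Real.log (hA.1.eigenvalues i) := by ring
    rw [h5, Real.exp_log (hA.eigenvalues_pos i)]
  rw [this]
  exact hA.1.spectral_theorem.symm

lemma frob_mlog {A : Mat} (hA : A.IsHermitian) :
    frob (mlog A) = Real.sqrt (∑ i, (Real.log (hA.eigenvalues i))^2) := by
  have hherm : (mlog A).IsHermitian := mlog_isHermitian hA
  rw [frob, hherm.eq, mlog_eq hA, conj_diag_mul, Matrix.trace_mul_cycle,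
    Matrix.mem_unitaryGroup_iff'.mp hA.eigenvectorUnitary.2, one_mul, Matrix.trace_diagonal]
  have : (∑ i, ((Real.log (hA.eigenvalues i) : ℂ) * (Real.log (hA.eigenvalues i) : ℂ))) =
      ((∑ i, (Real.log (hA.eigenvalues i))^2 : ℝ) : ℂ) := by
    push_cast
    ring
  rw [this, Complex.ofReal_re]

end Aux

section MainAux
variable {n : ℕ}
local notation "Mat" => Matrix (Fin n) (Fin n) ℂ

lemma mexp_neg (A : Mat) : mexp (-A) = (mexp A)⁻¹ := Matrix.exp_neg A

lemma mexp_add_of_commute {A B : Mat} (hc : Commute A B) :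
    mexp (A + B) = mexp A * mexp B := Matrix.exp_add_of_commute A B hc

end MainAux

/-- The geodesic `γ(t) = p^{1/2} (p^{-1/2} q p^{-1/2})^t p^{1/2}` joins `p` to `q`,
stays positive definite, and satisfies `dist(γ(s), γ(t)) = |t - s| · dist(p, q)`. -/
theorem geodesic_formula {n : ℕ} (p q : Matrix (Fin n) (Fin n) ℂ)
    (hp : p.PosDef) (hq : q.PosDef) :
    (fun t : ℝ => psqrt p * mexp (t • mlog ((psqrt p)⁻¹ * q * (psqrt p)⁻¹)) * psqrt p) 0 = p ∧
    (fun t : ℝ => psqrt p * mexp (t • mlog ((psqrt p)⁻¹ * q * (psqrt p)⁻¹)) * psqrt p) 1 = q ∧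
    (∀ t : ℝ,
      (psqrt p * mexp (t • mlog ((psqrt p)⁻¹ * q * (psqrt p)⁻¹)) * psqrt p).PosDef) ∧
    (∀ s t : ℝ,
      gdist (psqrt p * mexp (s • mlog ((psqrt p)⁻¹ * q * (psqrt p)⁻¹)) * psqrt p)
        (psqrt p * mexp (t • mlog ((psqrt p)⁻¹ * q * (psqrt p)⁻¹)) * psqrt p) =
      |t - s| * gdist p q) := by
  classical
  set P := psqrt p with hPdef
  have hPpd : P.PosDef := psqrt_posDef hp
  have hPunit : IsUnit P := hPpd.isUnit
  have hPdet : IsUnit P.det := (Matrix.isUnit_iff_isUnit_det P).mp hPunit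
  have hPinv_pd : (P⁻¹).PosDef := hPpd.inv
  set m := P⁻¹ * q * P⁻¹ with hmdef
  have hmpd : m.PosDef := by
    have hBH : (P⁻¹)ᴴ = P⁻¹ := hPinv_pd.1
    have h1 := posDef_conj (B := P⁻¹) hq hPinv_pd.isUnit
    rwa [hBH] at h1
  set h := mlog m with hhdef
  have hherm : h.IsHermitian := mlog_isHermitian hmpd.1
  set ν := hmpd.1.eigenvalues with hνdef
  set Um := hmpd.1.eigenvectorUnitary with hUmdef
  have hEt : ∀ r : ℝ, mexp (r • h) = (Um : Matrix (Fin n) (Fin n) ℂ) *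
      Matrix.diagonal (fun i => (Real.exp (r * Real.log (ν i)) : ℂ)) *
      star (Um : Matrix (Fin n) (Fin n) ℂ) :=
    fun r => mexp_smul_mlog hmpd.1 r
  have hEpd : ∀ r : ℝ, (mexp (r • h)).PosDef := fun r => by
    rw [hEt r]; exact conj_diag_posDef _ (fun i => Real.exp_pos _)
  have hγpd : ∀ r : ℝ, (P * mexp (r • h) * P).PosDef := fun r => by
    have h1 := posDef_conj (B := P) (hEpd r) hPunit
    rwa [hPpd.1] at h1
  have hc1 : P * P⁻¹ = 1 := Matrix.mul_nonsing_inv _ hPdet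
  have hc2 : P⁻¹ * P = 1 := Matrix.nonsing_inv_mul _ hPdet
  refine ⟨?_, ?_, hγpd, ?_⟩
  · show P * mexp ((0 : ℝ) • h) * P = p
    rw [zero_smul, show mexp (0 : Matrix (Fin n) (Fin n) ℂ) = 1 by rw [mexp]; exact NormedSpace.exp_zero,
      mul_one, psqrt_mul_self hp]
  · show P * mexp ((1 : ℝ) • h) * P = q
    rw [one_smul, hhdef, mexp_mlog hmpd, hmdef]
    calc P * (P⁻¹ * q * P⁻¹) * P = P * (P⁻¹ * (q * (P⁻¹ * P))) := by
          simp only [mul_assoc]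
      _ = q := by rw [hc2, mul_one, ← mul_assoc, hc1, one_mul]
  · intro s t
    set b := P * mexp (t • h) * P with hbdef
    set a := P * mexp (s • h) * P with hadef
    have hapd : a.PosDef := hγpd s
    have hbpd : b.PosDef := hγpd t
    set S := psqrt a with hSdef
    have hSpd : S.PosDef := psqrt_posDef hapd
    have hSdet : IsUnit S.det := (Matrix.isUnit_iff_isUnit_det S).mp hSpd.isUnit
    have hSinv_pd : (S⁻¹).PosDef := hSpd.inv
    set Y := S⁻¹ * b * S⁻¹ with hYdef
    have hYpd : Y.PosDef := by
      have hBH : (S⁻¹)ᴴ = S⁻¹ := hSinv_pd.1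
      have h1 := posDef_conj (B := S⁻¹) hbpd hSinv_pd.isUnit
      rwa [hBH] at h1
    have hSS : S * S = a := psqrt_mul_self hapd
    -- charpoly chain
    have hEm : mexp (t • h) * (mexp (s • h))⁻¹ = mexp ((t - s) • h) := by
      rw [← mexp_neg, ← mexp_add_of_commute (((Commute.refl h).smul_left t).smul_right s).neg_right]
      congr 1
      rw [← neg_smul, ← add_smul, ← sub_eq_add_neg]
    have c0 : Y.charpoly = (b * (S⁻¹ * S⁻¹)).charpoly := by
      rw [hYdef, mul_assoc, charpoly_mul_comm_unit hSinv_pd.isUnit, mul_assoc]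
    have c1 : b * (S⁻¹ * S⁻¹) = P * mexp ((t - s) • h) * P⁻¹ := by
      have h1 : S⁻¹ * S⁻¹ = a⁻¹ := by rw [← Matrix.mul_inv_rev, hSS]
      have h2 : a⁻¹ = P⁻¹ * (mexp (s • h))⁻¹ * P⁻¹ := by
        rw [hadef, Matrix.mul_inv_rev, Matrix.mul_inv_rev, ← mul_assoc]
      rw [h1, h2, hbdef]
      have cc : ∀ X : Matrix (Fin n) (Fin n) ℂ, P * (P⁻¹ * X) = X := fun X => by
        rw [← mul_assoc, hc1, one_mul]
      simp only [mul_assoc, cc]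
      rw [← mul_assoc (mexp (t • h)), hEm]
    have c2 : (P * mexp ((t - s) • h) * P⁻¹).charpoly =
        (Matrix.diagonal (fun i => (Real.exp ((t - s) * Real.log (ν i)) : ℂ))).charpoly := by
      rw [charpoly_conj_unit hPunit, hEt (t - s), _root_.star_eq_inv, charpoly_conj_unit (unit_isUnit Um)]
    have hcp : Y.charpoly = ∏ i, (X - C ((Real.exp ((t - s) * Real.log (ν i)) : ℝ) : ℂ)) := by
      rw [c0, c1, c2, _root_.charpoly_diagonal]
    have hms := eig_multiset hYpd.1 hcp
    have hgd1 : gdist a b = frob (mlog Y) := rfl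
    have hgd2 : gdist p q = frob (mlog m) := rfl
    rw [hgd1, hgd2, frob_mlog hYpd.1, frob_mlog hmpd.1]
    have hsum : ∑ i, (Real.log (hYpd.1.eigenvalues i))^2 =
        ∑ i, ((t - s) * Real.log (ν i))^2 := by
      have l := congrArg (fun M : Multiset ℝ => (M.map (fun x => (Real.log x)^2)).sum) hms
      simp only [Multiset.map_map, Function.comp] at l
      calc ∑ i, (Real.log (hYpd.1.eigenvalues i))^2
          = (Multiset.map (fun i => Real.log (hYpd.1.eigenvalues i) ^ 2) Finset.univ.val).sum :=
            rfl
        _ = (Multiset.map (fun i => Real.log (Real.exp ((t - s) * Real.log (ν i))) ^ 2)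
              Finset.univ.val).sum := l
        _ = ∑ i, Real.log (Real.exp ((t - s) * Real.log (ν i))) ^ 2 := rfl
        _ = ∑ i, ((t - s) * Real.log (ν i))^2 := by simp only [Real.log_exp]
    rw [hsum]
    have hfac : ∑ i, ((t - s) * Real.log (ν i))^2 = (t - s)^2 * ∑ i, (Real.log (ν i))^2 := by
      simp_rw [mul_pow]
      rw [← Finset.mul_sum]
    rw [hfac, Real.sqrt_mul (sq_nonneg _), Real.sqrt_sq_eq_abs]
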